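/- Let X, Y be metric spaces and f : X → Y a continuous open surjection, with X complete. Then for every subset S ⊆ Y there exists Z ⊆ X with dens(Z) ≤ dens(Y) and S ⊆ f(Z). -/
import Mathlib


noncomputable def densityCharacter (X : Type*) [TopologicalSpace X] : Cardinal :=
  sInf {c | ∃ s : Set X, Dense s ∧ Cardinal.mk s = c}

open Metric Set Cardinal Filter Topology

universe u

lemma my_subcover {Y : Type u} [MetricSpace Y] (D : Set Y) (hD : Dense D)
    {ι : Type u} (U : ι → Set Y) (hU : ∀ i, IsOpen (U i)) (T : Set Y)
    (hT : T ⊆ ⋃ i, U i) :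
    ∃ I : Set ι, #I ≤ #D * Cardinal.aleph0 ∧ T ⊆ ⋃ i ∈ I, U i := by
  classical
  set A : Set (D × ℕ) := {p | ∃ i, ball (p.1 : Y) (1 / (p.2 + 1)) ⊆ U i} with hA
  choose c hc using fun p : A => p.2
  refine ⟨range c, ?_, ?_⟩
  · calc #(range c) ≤ #A := mk_range_le
      _ ≤ #(D × ℕ) := mk_set_le _
      _ = #D * aleph0 := by simp [mk_prod, Cardinal.mk_nat]
  · intro y hy
    obtain ⟨i, hi⟩ := mem_iUnion.1 (hT hy)
    obtain ⟨ε, hε, hball⟩ := Metric.isOpen_iff.1 (hU i) y hi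
    obtain ⟨n, hn⟩ := exists_nat_one_div_lt (by positivity : (0:ℝ) < ε / 2)
    have hn' : (0:ℝ) < 1 / (n + 1) := by positivity
    obtain ⟨d, hdD, hdy⟩ : ∃ d ∈ D, d ∈ ball y (1 / (n + 1)) := by
      have := hD.exists_mem_open isOpen_ball ⟨y, mem_ball_self hn'⟩
      tauto
    have hmem : (⟨⟨d, hdD⟩, n⟩ : D × ℕ) ∈ A := by
      refine ⟨i, fun z hz => hball ?_⟩
      have h1 : dist z y < ε := by
        calc dist z y ≤ dist z d + dist d y := dist_triangle _ _ _
          _ < 1 / (n+1) + 1 / (n+1) := by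
              have := mem_ball.1 hz
              have := mem_ball.1 hdy
              push_cast at *
              linarith
          _ ≤ ε / 2 + ε / 2 := by push_cast at hn ⊢; linarith
          _ = ε := by ring
      exact mem_ball.2 h1
    refine mem_iUnion₂.2 ⟨c ⟨_, hmem⟩, mem_range_self _, ?_⟩
    apply hc ⟨_, hmem⟩
    exact mem_ball.2 (by simpa [dist_comm] using mem_ball.1 hdy)

lemma my_main {X Y : Type u} [MetricSpace X] [MetricSpace Y] [CompleteSpace X]
    (f : X → Y) (hf : Continuous f) (ho : IsOpenMap f) (hs : Function.Surjective f)
    (D : Set Y) (hD : Dense D) (hκ : Cardinal.aleph0 ≤ #D) :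
    ∃ Z : Set X, densityCharacter Z ≤ #D ∧ ∀ y : Y, y ∈ f '' Z := by
  classical
  set κ := #D with hκdef
  have hpos : ∀ n : ℕ, (0:ℝ) < (2:ℝ)⁻¹ ^ n := fun n => by positivity
  -- step lemma
  have step : ∀ (n : ℕ) (A : Set X), #A ≤ κ →
      (∀ y : Y, ∃ a ∈ A, y ∈ f '' ball a ((2:ℝ)⁻¹ ^ n)) →
      ∃ B : Set X, #B ≤ κ ∧
        ∀ a ∈ A, ∀ y ∈ f '' ball a ((2:ℝ)⁻¹ ^ n),
          ∃ b ∈ B, dist b a < (2:ℝ)⁻¹ ^ n ∧ y ∈ f '' ball b ((2:ℝ)⁻¹ ^ (n+1)) := by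
    intro n A hAcard _hAcov
    have key : ∀ a : A, ∃ I : Set (ball (a : X) ((2:ℝ)⁻¹ ^ n)),
        #I ≤ κ * Cardinal.aleph0 ∧
        f '' ball (a : X) ((2:ℝ)⁻¹ ^ n) ⊆
          ⋃ x ∈ I, f '' ball (x : X) ((2:ℝ)⁻¹ ^ (n+1)) := by
      intro a
      refine my_subcover D hD _ (fun x => ho _ isOpen_ball) _ ?_
      rintro y ⟨w, hw, rfl⟩
      exact mem_iUnion.2 ⟨⟨w, hw⟩, mem_image_of_mem f (mem_ball_self (hpos (n+1)))⟩
    choose I hI1 hI2 using key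
    refine ⟨⋃ a : A, Subtype.val '' (I a), ?_, ?_⟩
    · calc #(⋃ a : A, Subtype.val '' (I a)) ≤ #A * ⨆ a : A, #(Subtype.val '' (I a)) :=
          mk_iUnion_le _
        _ ≤ κ * κ := by
            refine mul_le_mul' hAcard (ciSup_le' fun a => ?_)
            exact (mk_image_le).trans ((hI1 a).trans (by
              rw [Cardinal.mul_aleph0_eq hκ]))
        _ = κ := Cardinal.mul_eq_self hκ
    · intro a ha y hy
      obtain ⟨x, hxI, hx⟩ := mem_iUnion₂.1 (hI2 ⟨a, ha⟩ hy)
      refine ⟨(x : X), mem_iUnion.2 ⟨⟨a, ha⟩, mem_image_of_mem _ hxI⟩, ?_, hx⟩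
      exact mem_ball.1 x.2
  -- base set
  obtain ⟨A0, hA0card, hA0cov⟩ : ∃ A0 : Set X, #A0 ≤ κ ∧
      ∀ y : Y, ∃ a ∈ A0, y ∈ f '' ball a ((2:ℝ)⁻¹ ^ 0) := by
    obtain ⟨I, hI1, hI2⟩ := my_subcover D hD (fun x : X => f '' ball x ((2:ℝ)⁻¹ ^ 0))
      (fun x => ho _ isOpen_ball) univ (by
        intro y _
        obtain ⟨x, rfl⟩ := hs y
        exact mem_iUnion.2 ⟨x, mem_image_of_mem f (mem_ball_self (hpos 0))⟩)
    refine ⟨I, hI1.trans (by rw [Cardinal.mul_aleph0_eq hκ]), fun y => ?_⟩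
    obtain ⟨a, haI, ha⟩ := mem_iUnion₂.1 (hI2 (mem_univ y))
    exact ⟨a, haI, ha⟩
  -- recursive construction of the sequence of sets
  let T : ℕ → Type u := fun n =>
    {A : Set X // #A ≤ κ ∧ ∀ y : Y, ∃ a ∈ A, y ∈ f '' ball a ((2:ℝ)⁻¹ ^ n)}
  let succ : ∀ n, T n → T (n+1) := fun n p =>
    ⟨(step n p.1 p.2.1 p.2.2).choose, (step n p.1 p.2.1 p.2.2).choose_spec.1, by
      intro y
      obtain ⟨a, ha, hy⟩ := p.2.2 y
      obtain ⟨b, hb, _, hyb⟩ := (step n p.1 p.2.1 p.2.2).choose_spec.2 a ha y hy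
      exact ⟨b, hb, hyb⟩⟩
  let Aseq : ∀ n, T n := fun n => Nat.rec (⟨A0, hA0card, hA0cov⟩ : T 0) succ n
  have hlink : ∀ n, ∀ a ∈ (Aseq n).1, ∀ y ∈ f '' ball a ((2:ℝ)⁻¹ ^ n),
      ∃ b ∈ (Aseq (n+1)).1, dist b a < (2:ℝ)⁻¹ ^ n ∧
        y ∈ f '' ball b ((2:ℝ)⁻¹ ^ (n+1)) := fun n =>
    (step n (Aseq n).1 (Aseq n).2.1 (Aseq n).2.2).choose_spec.2
  -- the candidate set
  set E : Set X := ⋃ i : ULift.{u} ℕ, (Aseq i.down).1 with hE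
  refine ⟨closure E, ?_, ?_⟩
  · -- density character bound
    have hEcard : #E ≤ κ := by
      calc #E ≤ #(ULift.{u} ℕ) * ⨆ i : ULift.{u} ℕ, #((Aseq i.down).1) := mk_iUnion_le _
        _ ≤ Cardinal.aleph0 * κ := by
            refine mul_le_mul' ?_ (ciSup_le' fun i => (Aseq i.down).2.1)
            exact Cardinal.mk_le_aleph0
        _ = κ := Cardinal.aleph0_mul_eq hκ
    have hdense : Dense (Subtype.val ⁻¹' E : Set (closure E)) := by
      intro z
      rw [closure_subtype]
      have : Subtype.val '' ((Subtype.val ⁻¹' E : Set (closure E))) = E := by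
        rw [Subtype.image_preimage_coe]
        exact inter_eq_self_of_subset_right subset_closure
      rw [this]
      exact z.2
    calc densityCharacter (closure E)
        ≤ #(Subtype.val ⁻¹' E : Set (closure E)) :=
          csInf_le' ⟨_, hdense, rfl⟩
      _ ≤ #E := mk_preimage_of_injective _ _ Subtype.val_injective
      _ ≤ κ := hEcard
  · -- surjectivity onto Y via limits
    intro y
    let Ty : ℕ → Type u := fun n =>
      {x : X // x ∈ (Aseq n).1 ∧ y ∈ f '' ball x ((2:ℝ)⁻¹ ^ n)}
    have hb0 : ∃ a ∈ (Aseq 0).1, y ∈ f '' ball a ((2:ℝ)⁻¹ ^ 0) := (Aseq 0).2.2 y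
    let b0 : Ty 0 := ⟨hb0.choose, hb0.choose_spec⟩
    let next : ∀ n, Ty n → Ty (n+1) := fun n p =>
      ⟨(hlink n p.1 p.2.1 y p.2.2).choose,
       (hlink n p.1 p.2.1 y p.2.2).choose_spec.1,
       (hlink n p.1 p.2.1 y p.2.2).choose_spec.2.2⟩
    let bseq : ∀ n, Ty n := fun n => Nat.rec b0 next n
    have hdist : ∀ n, dist ((bseq (n+1)).1) ((bseq n).1) < (2:ℝ)⁻¹ ^ n := fun n =>
      (hlink n (bseq n).1 (bseq n).2.1 y (bseq n).2.2).choose_spec.2.1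
    set u : ℕ → X := fun n => (bseq n).1 with hu
    have hcauchy : CauchySeq u := by
      refine cauchySeq_of_le_geometric (2:ℝ)⁻¹ 1 (by norm_num) (fun n => ?_)
      rw [dist_comm]
      exact (hdist n).le.trans_eq (one_mul _).symm
    obtain ⟨x, hx⟩ := cauchySeq_tendsto_of_complete hcauchy
    have hxZ : x ∈ closure E := by
      refine isClosed_closure.mem_of_tendsto hx (Eventually.of_forall fun n => ?_)
      exact subset_closure (mem_iUnion.2 ⟨⟨n⟩, (bseq n).2.1⟩)
    -- witnesses
    have hw : ∀ n, ∃ w, w ∈ ball (u n) ((2:ℝ)⁻¹ ^ n) ∧ f w = y := fun n => by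
      obtain ⟨w, hw1, hw2⟩ := (bseq n).2.2
      exact ⟨w, hw1, hw2⟩
    choose w hw1 hw2 using hw
    have hwx : Tendsto w atTop (𝓝 x) := by
      rw [tendsto_iff_dist_tendsto_zero]
      have hb : ∀ n, dist (w n) x ≤ (2:ℝ)⁻¹ ^ n + dist (u n) x := fun n =>
        (dist_triangle _ (u n) _).trans (by
          have := mem_ball.1 (hw1 n)
          linarith)
      have h1 : Tendsto (fun n : ℕ => (2:ℝ)⁻¹ ^ n + dist (u n) x) atTop (𝓝 0) := by
        have hp : Tendsto (fun n : ℕ => (2:ℝ)⁻¹ ^ n) atTop (𝓝 0) :=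
          tendsto_pow_atTop_nhds_zero_of_lt_one (by norm_num) (by norm_num)
        have hd : Tendsto (fun n : ℕ => dist (u n) x) atTop (𝓝 0) :=
          tendsto_iff_dist_tendsto_zero.1 hx
        simpa using hp.add hd
      exact squeeze_zero (fun n => dist_nonneg) hb h1
    have : Tendsto (fun n : ℕ => f (w n)) atTop (𝓝 (f x)) := (hf.tendsto x).comp hwx
    have hfx : f x = y := by
      have h2 : Tendsto (fun _ : ℕ => y) atTop (𝓝 (f x)) := by
        convert this using 1
        funext n; exact (hw2 n).symm
      exact (tendsto_nhds_unique h2 tendsto_const_nhds)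
    exact ⟨x, hxZ, hfx⟩

theorem stmt10 {X Y : Type u} [MetricSpace X] [MetricSpace Y] [CompleteSpace X]
    (f : X → Y) (hf : Continuous f) (ho : IsOpenMap f) (hs : Function.Surjective f)
    (S : Set Y) :
    ∃ Z : Set X, densityCharacter Z ≤ densityCharacter Y ∧ S ⊆ f '' Z := by
  classical
  have hne : {c | ∃ s : Set Y, Dense s ∧ Cardinal.mk s = c}.Nonempty :=
    ⟨#(Set.univ : Set Y), Set.univ, dense_univ, rfl⟩
  obtain ⟨D, hD, hDcard⟩ : ∃ D : Set Y, Dense D ∧ #D = densityCharacter Y :=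
    csInf_mem hne
  by_cases hκ : Cardinal.aleph0 ≤ #D
  · obtain ⟨Z, hZ1, hZ2⟩ := my_main f hf ho hs D hD hκ
    exact ⟨Z, hDcard ▸ hZ1, fun y _ => hZ2 y⟩
  · -- D is finite, hence Y is finite
    push_neg at hκ
    have hDfin : D.Finite := Cardinal.lt_aleph0_iff_set_finite.1 hκ
    have hDuniv : D = Set.univ := by
      have := hD.closure_eq
      rwa [hDfin.isClosed.closure_eq] at this
    set g : Y → X := fun y => (hs y).choose with hg
    refine ⟨g '' S, ?_, ?_⟩
    · have h1 : densityCharacter (g '' S) ≤ #(g '' S) := by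
        refine csInf_le' ⟨(Set.univ : Set (g '' S)), dense_univ, ?_⟩
        simp [Cardinal.mk_univ]
      refine h1.trans ?_
      rw [← hDcard]
      calc #(g '' S) ≤ #S := Cardinal.mk_image_le
        _ ≤ #(Set.univ : Set Y) := Cardinal.mk_le_mk_of_subset (subset_univ S)
        _ = #D := by rw [hDuniv]
    · intro y hy
      exact ⟨g y, mem_image_of_mem g hy, (hs y).choose_spec⟩
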